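/- Let γ > 0 and for x ∈ ℝ^d let μ_x denote the density (with respect to Lebesgue measure) of the uniform distribution on the closed Euclidean ball of radius γ centered at x. Then for all x, y ∈ ℝ^d, ∫_{ℝ^d} |μ_y(z) − μ_x(z)| dz ≤ (√d/γ) ‖y − x‖₂. -/

import Mathlib

open MeasureTheory Metric
open scoped ENNReal Real


lemma sqrt_le_iff' {S γ : ℝ} (hγ : 0 < γ) : Real.sqrt S ≤ γ ↔ S ≤ γ^2 := by
  constructor
  · intro h
    rcases le_or_gt 0 S with hS | hS
    · have := pow_le_pow_left₀ (Real.sqrt_nonneg S) h 2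
      rwa [Real.sq_sqrt hS] at this
    · nlinarith
  · intro h
    calc Real.sqrt S ≤ Real.sqrt (γ^2) := Real.sqrt_le_sqrt h
      _ = γ := Real.sqrt_sq hγ.le

lemma mem_ball_iff_sum {m : ℕ} {γ : ℝ} (hγ : 0 < γ) (c z : EuclideanSpace ℝ (Fin m)) :
    z ∈ closedBall c γ ↔ ∑ i, (z i - c i)^2 ≤ γ^2 := by
  rw [mem_closedBall, dist_eq_norm, ← sqrt_le_iff' hγ]
  rw [EuclideanSpace.norm_eq]
  simp only [PiLp.sub_apply, Real.norm_eq_abs, sq_abs]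

set_option maxHeartbeats 1000000 in
lemma symmDiff_ball_vol {m : ℕ} {γ : ℝ} (hγ : 0 < γ) (x v : EuclideanSpace ℝ (Fin (m+1))) :
    volume (symmDiff (closedBall x γ) (closedBall (x + v) γ))
      ≤ ENNReal.ofReal (2 * ‖v‖) * volume (closedBall (0 : EuclideanSpace ℝ (Fin m)) γ) := by
  rcases eq_or_ne v 0 with hv | hv
  · simp [hv, symmDiff_self]
  set t : ℝ := ‖v‖ with ht_def
  have ht : 0 < t := norm_pos_iff.mpr hv
  -- rotate `v` to `t • e0`
  set e0 : EuclideanSpace ℝ (Fin (m+1)) := EuclideanSpace.single 0 1 with he0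
  have he0n : ‖e0‖ = 1 := by rw [he0, EuclideanSpace.norm_single]; norm_num
  set u : EuclideanSpace ℝ (Fin (m+1)) := t⁻¹ • v with hu_def
  have hun : ‖u‖ = 1 := by
    rw [hu_def, norm_smul, norm_inv, Real.norm_eq_abs, abs_of_pos ht, ← ht_def,
      inv_mul_cancel₀ ht.ne']
  set R := Submodule.reflection (ℝ ∙ (u - e0))ᗮ with hR_def
  have hRu : R u = e0 := Submodule.reflection_sub (by rw [hun, he0n])
  have hRv : R v = t • e0 := by
    have hvu : v = t • u := by rw [hu_def, smul_inv_smul₀ ht.ne']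
    rw [hvu, _root_.map_smul, hRu]
  -- measure preserving affine map
  set ψ : EuclideanSpace ℝ (Fin (m+1)) → EuclideanSpace ℝ (Fin (m+1)) :=
    fun z => R.symm z + x with hψ_def
  have hψ : MeasurePreserving ψ volume volume :=
    (measurePreserving_add_right volume x).comp R.symm.measurePreserving
  have hp1 : ψ ⁻¹' (closedBall x γ) = closedBall 0 γ := by
    ext z
    simp only [Set.mem_preimage, hψ_def, mem_closedBall, dist_eq_norm, add_sub_cancel_right,
      sub_zero, LinearIsometryEquiv.norm_map]
  have hp2 : ψ ⁻¹' (closedBall (x + v) γ) = closedBall (t • e0) γ := by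
    ext z
    have harg : R.symm z + x - (x + v) = R.symm (z - t • e0) := by
      have : R.symm (t • e0) = v := by
        rw [← hRv, LinearIsometryEquiv.symm_apply_apply]
      rw [map_sub, this]
      abel
    simp only [Set.mem_preimage, hψ_def, mem_closedBall, dist_eq_norm, harg,
      LinearIsometryEquiv.norm_map]
  have hmeasBalls : MeasurableSet
      (symmDiff (closedBall x γ) (closedBall (x + v) γ)) :=
    measurableSet_closedBall.symmDiff measurableSet_closedBall
  have hΔ : volume (symmDiff (closedBall x γ) (closedBall (x + v) γ))
      = volume (symmDiff (closedBall (0 : EuclideanSpace ℝ (Fin (m+1))) γ)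
          (closedBall (t • e0) γ)) := by
    rw [← hψ.measure_preimage hmeasBalls.nullMeasurableSet, Set.preimage_symmDiff, hp1, hp2]
  rw [hΔ]
  -- transfer to ℝ × (Fin m → ℝ)
  set f : EuclideanSpace ℝ (Fin (m+1)) → ℝ × (Fin m → ℝ) :=
    fun z => ((MeasurableEquiv.piFinSuccAbove (fun _ : Fin (m+1) => ℝ) 0)
      (((MeasurableEquiv.toLp 2 (Fin (m+1) → ℝ)).symm) z)) with hf_def
  have hf : MeasurePreserving f volume volume :=
    (volume_preserving_piFinSuccAbove (fun _ : Fin (m+1) => ℝ) 0).comp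
      (EuclideanSpace.volume_preserving_symm_measurableEquiv_toLp (Fin (m+1)))
  have hfz : ∀ z : EuclideanSpace ℝ (Fin (m+1)),
      f z = (z 0, fun j => z ((0 : Fin (m+1)).succAbove j)) := by
    intro z
    rw [hf_def]
    simp [MeasurableEquiv.piFinSuccAbove_apply, MeasurableEquiv.coe_toLp_symm,
      Fin.insertNthEquiv, Fin.removeNth]
    rfl
  set T₁ : Set (ℝ × (Fin m → ℝ)) := {p | p.1^2 + ∑ j, (p.2 j)^2 ≤ γ^2} with hT1_def
  set T₂ : Set (ℝ × (Fin m → ℝ)) := {p | (p.1 - t)^2 + ∑ j, (p.2 j)^2 ≤ γ^2} with hT2_def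
  have hT1m : MeasurableSet T₁ := by
    apply measurableSet_le _ measurable_const
    fun_prop
  have hT2m : MeasurableSet T₂ := by
    apply measurableSet_le _ measurable_const
    fun_prop
  have hpre1 : f ⁻¹' T₁ = closedBall (0 : EuclideanSpace ℝ (Fin (m+1))) γ := by
    ext z
    rw [Set.mem_preimage, hfz z, mem_ball_iff_sum hγ]
    simp only [hT1_def, Set.mem_setOf_eq, PiLp.zero_apply, sub_zero]
    rw [Fin.sum_univ_succAbove (fun i => (z i)^2) 0]
  have hpre2 : f ⁻¹' T₂ = closedBall (t • e0) γ := by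
    ext z
    rw [Set.mem_preimage, hfz z, mem_ball_iff_sum hγ]
    simp only [hT2_def, Set.mem_setOf_eq]
    rw [Fin.sum_univ_succAbove (fun i => (z i - (t • e0) i)^2) 0]
    have h0 : (t • e0) 0 = t := by
      rw [he0]
      simp [EuclideanSpace.single_apply]
    have hsucc : ∀ j : Fin m, (t • e0) ((0 : Fin (m+1)).succAbove j) = 0 := by
      intro j
      rw [he0]
      simp [EuclideanSpace.single_apply, Fin.succ_ne_zero]
    simp only [h0, hsucc, sub_zero]
  have hTm : MeasurableSet (symmDiff T₁ T₂) := hT1m.symmDiff hT2m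
  have hvolT : volume (symmDiff (closedBall (0 : EuclideanSpace ℝ (Fin (m+1))) γ)
      (closedBall (t • e0) γ)) = volume (symmDiff T₁ T₂) := by
    rw [← hf.measure_preimage hTm.nullMeasurableSet, Set.preimage_symmDiff, hpre1, hpre2]
  rw [hvolT]
  -- Fubini: integrate over the tail
  rw [Measure.volume_eq_prod, Measure.prod_apply_symm hTm]
  -- set of admissible tails
  set W : Set (Fin m → ℝ) := {w | ∑ j, (w j)^2 ≤ γ^2} with hW_def
  have hWm : MeasurableSet W := by
    apply measurableSet_le _ measurable_const
    fun_prop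
  have hslice : ∀ w : Fin m → ℝ,
      volume ((fun s => (s, w)) ⁻¹' (symmDiff T₁ T₂))
        ≤ W.indicator (fun _ => ENNReal.ofReal (2 * t)) w := by
    intro w
    set Q : ℝ := ∑ j, (w j)^2 with hQ
    have hQ0 : 0 ≤ Q := Finset.sum_nonneg fun j _ => sq_nonneg _
    have hsl : (fun s => (s, w)) ⁻¹' (symmDiff T₁ T₂)
        = symmDiff {s : ℝ | s^2 + Q ≤ γ^2} {s : ℝ | (s - t)^2 + Q ≤ γ^2} := by
      rw [Set.preimage_symmDiff]
      rfl
    rw [hsl]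
    by_cases hw : w ∈ W
    · rw [Set.indicator_of_mem hw]
      set r : ℝ := Real.sqrt (γ^2 - Q) with hr
      have hr0 : 0 ≤ r := Real.sqrt_nonneg _
      have hr2 : r^2 = γ^2 - Q := Real.sq_sqrt (by simpa [hW_def, hQ] using hw)
      have hsub : symmDiff {s : ℝ | s^2 + Q ≤ γ^2} {s : ℝ | (s - t)^2 + Q ≤ γ^2}
          ⊆ Set.Icc (-r) (t - r) ∪ Set.Icc r (t + r) := by
        intro s hs
        rcases Set.mem_symmDiff.mp hs with ⟨h1, h2⟩ | ⟨h1, h2⟩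
        · simp only [Set.mem_setOf_eq, not_le] at h1 h2
          have hs2 : s^2 ≤ r^2 := by linarith
          have hst2 : r^2 < (s - t)^2 := by linarith
          have hgl : -r ≤ s := by
            by_contra hc
            push_neg at hc
            nlinarith [mul_pos (by linarith : (0:ℝ) < -s - r) (by linarith : (0:ℝ) < r - s)]
          have hsr : s ≤ r := by
            by_contra hc
            push_neg at hc
            nlinarith [mul_pos (by linarith : (0:ℝ) < s - r) (by linarith : (0:ℝ) < s + r)]
          left
          refine ⟨hgl, ?_⟩
          by_contra hc
          push_neg at hc
          nlinarith [mul_nonneg (by linarith : (0:ℝ) ≤ s - t + r) (by linarith : (0:ℝ) ≤ r - s + t)]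
        · simp only [Set.mem_setOf_eq, not_le] at h1 h2
          have hst2 : (s - t)^2 ≤ r^2 := by linarith
          have hs2 : r^2 < s^2 := by linarith
          have hub : s ≤ t + r := by
            by_contra hc
            push_neg at hc
            nlinarith [mul_pos (by linarith : (0:ℝ) < s - t - r) (by linarith : (0:ℝ) < s - t + r)]
          have hlb : t - r ≤ s := by
            by_contra hc
            push_neg at hc
            nlinarith [mul_pos (by linarith : (0:ℝ) < t - s - r) (by linarith : (0:ℝ) < t - s + r)]
          right
          refine ⟨?_, hub⟩
          by_contra hc
          push_neg at hc
          nlinarith [mul_nonneg (by linarith : (0:ℝ) ≤ r - s) (by linarith : (0:ℝ) ≤ s + r)]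
      calc volume (symmDiff {s : ℝ | s^2 + Q ≤ γ^2} {s : ℝ | (s - t)^2 + Q ≤ γ^2})
          ≤ volume (Set.Icc (-r) (t - r) ∪ Set.Icc r (t + r)) := measure_mono hsub
        _ ≤ volume (Set.Icc (-r) (t - r)) + volume (Set.Icc r (t + r)) := measure_union_le _ _
        _ = ENNReal.ofReal (2 * t) := by
            rw [Real.volume_Icc, Real.volume_Icc, ← ENNReal.ofReal_add (by linarith) (by linarith)]
            congr 1
            ring
    · rw [Set.indicator_of_notMem hw]
      have : symmDiff {s : ℝ | s^2 + Q ≤ γ^2} {s : ℝ | (s - t)^2 + Q ≤ γ^2} = ∅ := by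
        have hQγ : γ^2 < Q := by
          simpa [hW_def, hQ, not_le] using hw
        have h1 : {s : ℝ | s^2 + Q ≤ γ^2} = ∅ := by
          ext s; simp only [Set.mem_setOf_eq, Set.mem_empty_iff_false, iff_false, not_le]
          nlinarith [sq_nonneg s]
        have h2 : {s : ℝ | (s - t)^2 + Q ≤ γ^2} = ∅ := by
          ext s; simp only [Set.mem_setOf_eq, Set.mem_empty_iff_false, iff_false, not_le]
          nlinarith [sq_nonneg (s - t)]
        rw [h1, h2, symmDiff_self]
        rfl
      rw [this]
      simp
  calc ∫⁻ w, volume ((fun s => (s, w)) ⁻¹' (symmDiff T₁ T₂))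
      ≤ ∫⁻ w, W.indicator (fun _ => ENNReal.ofReal (2 * t)) w := lintegral_mono hslice
    _ = ENNReal.ofReal (2 * t) * volume W := lintegral_indicator_const hWm _
    _ = ENNReal.ofReal (2 * t) * volume (closedBall (0 : EuclideanSpace ℝ (Fin m)) γ) := by
        congr 1
        have hWpre : ((MeasurableEquiv.toLp 2 (Fin m → ℝ)).symm) ⁻¹' W
            = closedBall (0 : EuclideanSpace ℝ (Fin m)) γ := by
          ext z
          rw [Set.mem_preimage, mem_ball_iff_sum hγ]
          simp only [hW_def, Set.mem_setOf_eq, PiLp.zero_apply, sub_zero,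
            MeasurableEquiv.coe_toLp_symm]
        rw [← (EuclideanSpace.volume_preserving_symm_measurableEquiv_toLp (Fin m)).measure_preimage
          hWm.nullMeasurableSet, hWpre]

lemma gamma_midpoint {x : ℝ} (hx : 0 < x) :
    Real.Gamma (x + 1) ≤ Real.sqrt (x + 1/2) * Real.Gamma (x + 1/2) := by
  have h1 : (0:ℝ) < x + 1/2 := by linarith
  have h2 : (0:ℝ) < x + 3/2 := by linarith
  have h := Real.Gamma_mul_add_mul_le_rpow_Gamma_mul_rpow_Gamma h1 h2
      (a := 1/2) (b := 1/2) (by norm_num) (by norm_num) (by norm_num)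
  have e1 : (1/2) * (x + 1/2) + (1/2) * (x + 3/2) = x + 1 := by ring
  rw [e1] at h
  have e2 : Real.Gamma (x + 3/2) = (x + 1/2) * Real.Gamma (x + 1/2) := by
    have e3 : x + 3/2 = (x + 1/2) + 1 := by ring
    rw [e3, Real.Gamma_add_one h1.ne']
  rw [e2] at h
  have hG : 0 ≤ Real.Gamma (x + 1/2) := Real.Gamma_nonneg_of_nonneg h1.le
  calc Real.Gamma (x+1)
      ≤ Real.Gamma (x+1/2) ^ ((1:ℝ)/2) * ((x+1/2) * Real.Gamma (x+1/2)) ^ ((1:ℝ)/2) := h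
    _ = Real.sqrt (x+1/2) * Real.Gamma (x+1/2) := by
        rw [← Real.sqrt_eq_rpow, ← Real.sqrt_eq_rpow, Real.sqrt_mul h1.le]
        rw [← mul_assoc, mul_comm (Real.sqrt (Real.Gamma (x+1/2))), mul_assoc,
          Real.mul_self_sqrt hG]

lemma two_gamma_le (m : ℕ) :
    2 * Real.Gamma (((m:ℝ) + 1)/2 + 1)
      ≤ Real.sqrt ((m:ℝ)+1) * Real.sqrt π * Real.Gamma ((m:ℝ)/2 + 1) := by
  rcases Nat.eq_zero_or_pos m with hm | hm
  · subst hm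
    push_cast
    have e1 : ((0:ℝ) + 1)/2 + 1 = 1/2 + 1 := by norm_num
    rw [e1, Real.Gamma_add_one (by norm_num), Real.Gamma_one_half_eq]
    norm_num [Real.Gamma_one, Real.sqrt_one]
    linarith [Real.sqrt_nonneg π]
  · have hx : (0:ℝ) < ((m:ℝ)+1)/2 := by positivity
    have h := gamma_midpoint hx
    have e1 : ((m:ℝ)+1)/2 + 1/2 = (m:ℝ)/2 + 1 := by ring
    rw [e1] at h
    have hG : 0 ≤ Real.Gamma ((m:ℝ)/2 + 1) := Real.Gamma_nonneg_of_nonneg (by positivity)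
    have key : 2 * Real.sqrt ((m:ℝ)/2 + 1) ≤ Real.sqrt ((m:ℝ)+1) * Real.sqrt π := by
      have e2 : (2:ℝ) * Real.sqrt ((m:ℝ)/2 + 1) = Real.sqrt (4 * ((m:ℝ)/2 + 1)) := by
        rw [Real.sqrt_mul (by norm_num), show Real.sqrt 4 = 2 by
          rw [show (4:ℝ) = 2^2 by norm_num, Real.sqrt_sq (by norm_num)]]
      rw [e2, ← Real.sqrt_mul (by positivity)]
      apply Real.sqrt_le_sqrt
      have hpi := Real.pi_gt_three
      have hm1 : (1:ℝ) ≤ (m:ℝ) := by exact_mod_cast hm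
      nlinarith
    calc 2 * Real.Gamma (((m:ℝ)+1)/2 + 1)
        ≤ 2 * (Real.sqrt ((m:ℝ)/2 + 1) * Real.Gamma ((m:ℝ)/2+1)) := by linarith [mul_le_mul_of_nonneg_left h (by norm_num : (0:ℝ) ≤ 2)]
      _ = (2 * Real.sqrt ((m:ℝ)/2 + 1)) * Real.Gamma ((m:ℝ)/2+1) := by ring
      _ ≤ (Real.sqrt ((m:ℝ)+1) * Real.sqrt π) * Real.Gamma ((m:ℝ)/2+1) :=
          mul_le_mul_of_nonneg_right key hG

lemma vol_ball_eq (m : ℕ) {γ : ℝ} (hγ : 0 < γ) (x : EuclideanSpace ℝ (Fin m)) :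
    volume (closedBall x γ)
      = ENNReal.ofReal (γ ^ m * Real.sqrt π ^ m / Real.Gamma ((m:ℝ)/2 + 1)) := by
  cases m with
  | zero =>
      have hball : closedBall x γ = Set.univ := by
        ext z
        simp only [mem_closedBall, Set.mem_univ, iff_true]
        have : z = x := (WithLp.ext_iff _).2 (funext (fun i => Fin.elim0 i))
        simp [this, hγ.le]
      rw [hball]
      have h := (EuclideanSpace.volume_preserving_symm_measurableEquiv_toLp (Fin 0)).measure_preimage
        (MeasurableSet.univ.nullMeasurableSet)
      have hpre : ((MeasurableEquiv.toLp 2 (Fin 0 → ℝ)).symm) ⁻¹' Set.univ = Set.univ := rfl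
      rw [hpre] at h
      rw [h]
      rw [show ((volume : Measure (Fin 0 → ℝ)) Set.univ) = 1 by
        rw [MeasureTheory.volume_pi, Measure.pi_univ]; simp]
      norm_num [Real.Gamma_one]
  | succ k =>
      rw [EuclideanSpace.volume_closedBall]
      rw [← ENNReal.ofReal_pow hγ.le, ← ENNReal.ofReal_mul (by positivity)]
      congr 1
      rw [Fintype.card_fin]
      push_cast
      ring


/-- The density (w.r.t. Lebesgue measure) of the uniform distribution on the closed
Euclidean ball of radius `γ` centered at `x`. -/
noncomputable def ballUniformDensity {d : ℕ} (γ : ℝ) (x z : EuclideanSpace ℝ (Fin d)) : ℝ :=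
  (closedBall x γ).indicator (fun _ => ((volume (closedBall x γ)).toReal)⁻¹) z

theorem uniform_densities_L1_bound {d : ℕ} {γ : ℝ} (hγ : 0 < γ)
    (x y : EuclideanSpace ℝ (Fin d)) :
    ∫ z, |ballUniformDensity γ y z - ballUniformDensity γ x z|
      ≤ (Real.sqrt d / γ) * ‖y - x‖ := by
  cases d with
  | zero =>
      have hxy : y = x := (WithLp.ext_iff _).2 (funext fun i => Fin.elim0 i)
      simp [hxy]
  | succ m =>
      by_cases hxy : y = x
      · simp [hxy]
      push_cast
      set v := y - x with hv
      have hvne : v ≠ 0 := sub_ne_zero.mpr hxy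
      set t := ‖v‖ with ht_def
      have ht : 0 < t := norm_pos_iff.mpr hvne
      have hcast : (((m+1:ℕ)):ℝ) = (m:ℝ)+1 := by push_cast; ring
      set ΓA := Real.Gamma ((m:ℝ)/2 + 1) with hΓA_def
      set ΓB := Real.Gamma (((m:ℝ)+1)/2 + 1) with hΓB_def
      have hΓA : 0 < ΓA := Real.Gamma_pos_of_pos (by positivity)
      have hΓB : 0 < ΓB := Real.Gamma_pos_of_pos (by positivity)
      set Dm := γ^m * Real.sqrt π^m / ΓA with hDm_def
      set D := γ^(m+1) * Real.sqrt π^(m+1) / ΓB with hD_def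
      have hDm : 0 < Dm := by positivity
      have hD : 0 < D := by positivity
      have hVx : volume (closedBall x γ) = ENNReal.ofReal D := by
        have h := vol_ball_eq (m+1) hγ x
        rwa [hcast] at h
      have hVy : volume (closedBall y γ) = ENNReal.ofReal D := by
        have h := vol_ball_eq (m+1) hγ y
        rwa [hcast] at h
      have hVm : volume (closedBall (0 : EuclideanSpace ℝ (Fin m)) γ)
          = ENNReal.ofReal Dm := vol_ball_eq m hγ 0
      have hfun : (fun z => |ballUniformDensity γ y z - ballUniformDensity γ x z|)
          = (symmDiff (closedBall y γ) (closedBall x γ)).indicator (fun _ => D⁻¹) := by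
        funext z
        unfold ballUniformDensity
        rw [hVx, hVy, ENNReal.toReal_ofReal hD.le]
        by_cases h1 : z ∈ closedBall y γ <;> by_cases h2 : z ∈ closedBall x γ <;>
          simp [Set.indicator_apply, h1, h2, Set.mem_symmDiff,
            abs_of_nonneg (inv_nonneg.mpr hD.le)]
      rw [hfun, integral_indicator_const _
        (measurableSet_closedBall.symmDiff measurableSet_closedBall), smul_eq_mul]
      have hball : x + v = y := by rw [hv]; abel
      have hvol : volume (symmDiff (closedBall y γ) (closedBall x γ))
          ≤ ENNReal.ofReal (2*t) * ENNReal.ofReal Dm := by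
        rw [symmDiff_comm]
        calc volume (symmDiff (closedBall x γ) (closedBall y γ))
            = volume (symmDiff (closedBall x γ) (closedBall (x+v) γ)) := by rw [hball]
          _ ≤ ENNReal.ofReal (2*‖v‖) * volume (closedBall (0 : EuclideanSpace ℝ (Fin m)) γ) :=
              symmDiff_ball_vol hγ x v
          _ = ENNReal.ofReal (2*t) * ENNReal.ofReal Dm := by rw [hVm, ht_def]
      have hreal : (volume (symmDiff (closedBall y γ) (closedBall x γ))).toReal ≤ 2*t*Dm := by
        have hne : ENNReal.ofReal (2*t) * ENNReal.ofReal Dm ≠ ⊤ :=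
          ENNReal.mul_ne_top ENNReal.ofReal_ne_top ENNReal.ofReal_ne_top
        have h := ENNReal.toReal_mono hne hvol
        rwa [ENNReal.toReal_mul, ENNReal.toReal_ofReal (by positivity),
          ENNReal.toReal_ofReal hDm.le] at h
      have hkey : 2 * Dm * γ ≤ Real.sqrt ((m:ℝ)+1) * D := by
        have base := two_gamma_le m
        have hdiv : 2 / ΓA ≤ (Real.sqrt ((m:ℝ)+1) * Real.sqrt π) / ΓB := by
          rw [div_le_div_iff₀ hΓA hΓB]
          linarith
        have e1 : 2 * Dm * γ = (γ^(m+1) * Real.sqrt π^m) * (2 / ΓA) := by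
          rw [hDm_def, pow_succ]; ring
        have e2 : Real.sqrt ((m:ℝ)+1) * D
            = (γ^(m+1) * Real.sqrt π^m) * ((Real.sqrt ((m:ℝ)+1) * Real.sqrt π) / ΓB) := by
          rw [hD_def, pow_succ]; ring
        rw [e1, e2]
        exact mul_le_mul_of_nonneg_left hdiv (by positivity)
      rw [← div_eq_mul_inv, div_le_iff₀ hD]
      calc (volume (symmDiff (closedBall y γ) (closedBall x γ))).toReal
          ≤ 2*t*Dm := hreal
        _ = t/γ*(2*Dm*γ) := by field_simp
        _ ≤ t/γ*(Real.sqrt ((m:ℝ)+1) * D) :=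
            mul_le_mul_of_nonneg_left hkey (by positivity)
        _ = Real.sqrt ((m:ℝ)+1)/γ * t * D := by ring
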